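/- The one-dimensional Banach space ℝ can be U-embedded into C(K) for a compact Hausdorff space K if and only if K contains at least one Gδ point. -/

import Mathlib

/-- Evaluation at a point as a continuous linear functional on `C(K, ℝ)`. -/
private noncomputable def evalCLM' {K : Type*} [TopologicalSpace K] [CompactSpace K] (t : K) :
    C(K, ℝ) →L[ℝ] ℝ :=
  LinearMap.mkContinuous
    { toFun := fun h => h t, map_add' := fun _ _ => rfl, map_smul' := fun _ _ => rfl } 1
    (fun h => by simpa using h.norm_coe_le_norm t)

@[simp] private lemma evalCLM'_apply {K : Type*} [TopologicalSpace K] [CompactSpace K]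
    (t : K) (h : C(K, ℝ)) : evalCLM' t h = h t := rfl

/-- Preimage of a Gδ set under a continuous map is Gδ. -/
private lemma isGδ_preimage {X Y : Type*} [TopologicalSpace X] [TopologicalSpace Y]
    {s : Set Y} (hs : IsGδ s) {f : X → Y} (hf : Continuous f) : IsGδ (f ⁻¹' s) := by
  obtain ⟨T, hTo, hTc, rfl⟩ := hs
  rw [Set.preimage_sInter]
  exact IsGδ.biInter hTc (fun t ht => ((hTo t ht).preimage hf).isGδ)

/-- If `g` peaks only at `t₀`, then any norm-one functional supporting `g` is evaluation
at `t₀`. -/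
private lemma smooth_support_eval {K : Type*} [TopologicalSpace K] [CompactSpace K]
    (g : C(K, ℝ)) (t₀ : K) (hg0 : ∀ t, 0 ≤ g t) (hg1 : ∀ t, g t ≤ 1)
    (hgt₀ : g t₀ = 1) (huniq : ∀ t, g t = 1 → t = t₀)
    (L : C(K, ℝ) →L[ℝ] ℝ) (hLn : ‖L‖ ≤ 1) (hLg : L g = 1) :
    ∀ h : C(K, ℝ), L h = h t₀ := by
  have key : ∀ h : C(K, ℝ), L h ≤ h t₀ := by
    intro h
    refine le_of_forall_pos_le_add fun ε hε => ?_
    set C : Set K := {t | h t₀ + ε ≤ h t} with hC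
    have hCclosed : IsClosed C := isClosed_le continuous_const (map_continuous h)
    obtain ⟨δ, hδ0, hδ1, hδ⟩ : ∃ δ : ℝ, 0 ≤ δ ∧ δ < 1 ∧ ∀ t ∈ C, g t ≤ δ := by
      rcases C.eq_empty_or_nonempty with hCe | hCne
      · exact ⟨0, le_refl _, one_pos, by simp [hCe]⟩
      · obtain ⟨t₁, ht₁C, ht₁max⟩ :=
          hCclosed.isCompact.exists_isMaxOn hCne (map_continuous g).continuousOn
        refine ⟨g t₁, hg0 t₁, ?_, fun t ht => ht₁max ht⟩
        rcases lt_or_eq_of_le (hg1 t₁) with h1 | h1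
        · exact h1
        · exfalso
          have ht₁ : t₁ = t₀ := huniq t₁ h1
          rw [ht₁] at ht₁C
          have : h t₀ + ε ≤ h t₀ := ht₁C
          linarith
    set D : ℝ := ‖h‖ + |h t₀| + ε + 1 with hD
    have hDpos : 0 < D := by positivity
    set s : ℝ := (1 - δ) / D with hs
    have hspos : 0 < s := div_pos (by linarith) hDpos
    have hkey' : s * ‖h‖ + s * |h t₀| + s * ε ≤ 1 - δ := by
      have h1 : s * D = 1 - δ := by
        rw [hs]; field_simp
      nlinarith [hspos]
    have p3 : -(s * |h t₀|) ≤ s * h t₀ := by nlinarith [neg_abs_le (h t₀)]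
    have p4 : 0 ≤ s * ε := by positivity
    have p5 : 0 ≤ s * ‖h‖ := by positivity
    have hpt : ∀ t, |g t + s * h t| ≤ 1 + s * (h t₀ + ε) := by
      intro t
      have hht : |h t| ≤ ‖h‖ := by simpa using h.norm_coe_le_norm t
      have p1 : s * h t ≤ s * ‖h‖ :=
        mul_le_mul_of_nonneg_left (le_trans (le_abs_self _) hht) hspos.le
      have p2 : -(s * ‖h‖) ≤ s * h t := by nlinarith [neg_abs_le (h t), hht]
      rw [abs_le]
      constructor
      · linarith [hg0 t]
      · by_cases htC : t ∈ C
        · have := hδ t htC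
          linarith
        · have hlt : h t < h t₀ + ε := by
            simp only [hC, Set.mem_setOf_eq, not_le] at htC
            exact htC
          have p6 : s * h t ≤ s * (h t₀ + ε) :=
            mul_le_mul_of_nonneg_left hlt.le hspos.le
          have := hg1 t
          linarith
    have hCnonneg : 0 ≤ 1 + s * (h t₀ + ε) := by nlinarith
    have hnorm : ‖g + s • h‖ ≤ 1 + s * (h t₀ + ε) := by
      refine (ContinuousMap.norm_le _ hCnonneg).mpr fun t => ?_
      have : (g + s • h) t = g t + s * h t := by
        simp [smul_eq_mul]
      rw [this, Real.norm_eq_abs]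
      exact hpt t
    have hL : L (g + s • h) ≤ 1 + s * (h t₀ + ε) := by
      have h1 := L.le_opNorm (g + s • h)
      rw [Real.norm_eq_abs] at h1
      calc L (g + s • h) ≤ |L (g + s • h)| := le_abs_self _
        _ ≤ ‖L‖ * ‖g + s • h‖ := h1
        _ ≤ 1 * (1 + s * (h t₀ + ε)) := mul_le_mul hLn hnorm (norm_nonneg _) zero_le_one
        _ = 1 + s * (h t₀ + ε) := one_mul _
    have hexp : L (g + s • h) = 1 + s * L h := by
      rw [map_add, map_smul, hLg, smul_eq_mul]
    rw [hexp] at hL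
    have : s * L h ≤ s * (h t₀ + ε) := by linarith
    exact le_of_mul_le_mul_left this hspos
  intro h
  have h1 := key h
  have h2 := key (-h)
  rw [map_neg] at h2
  have h3 : (-h) t₀ = -(h t₀) := rfl
  rw [h3] at h2
  linarith

/-- The one-dimensional Banach space `ℝ` can be U-embedded into `C(K)` (`K` compact
Hausdorff) if and only if `K` contains at least one `Gδ` point. -/
theorem real_UEmbeddable_iff_exists_Gdelta_point
    (K : Type*) [TopologicalSpace K] [CompactSpace K] [T2Space K] :
    (∃ T : ℝ →ₗᵢ[ℝ] C(K, ℝ),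
        ∀ f : ℝ →L[ℝ] ℝ, ∃! g : C(K, ℝ) →L[ℝ] ℝ,
          (∀ x : ℝ, g (T x) = f x) ∧ ‖g‖ = ‖f‖) ↔
      ∃ t : K, IsGδ ({t} : Set K) := by
  constructor
  · rintro ⟨T, hT⟩
    set g : C(K, ℝ) := T 1 with hg
    have hgnorm : ‖g‖ = 1 := by rw [hg, T.norm_map]; exact norm_one
    have hTx : ∀ x : ℝ, T x = x • g := by
      intro x; rw [hg, ← T.map_smul, smul_eq_mul, mul_one]
    have hK : Nonempty K := by
      by_contra hK
      have hg0 : g = 0 := ContinuousMap.ext fun t => absurd ⟨t⟩ hK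
      rw [hg0, norm_zero] at hgnorm; exact zero_ne_one hgnorm
    obtain ⟨t₀, -, ht₀max⟩ := isCompact_univ.exists_isMaxOn Set.univ_nonempty
      ((continuous_abs.comp (map_continuous g)).continuousOn)
    have hmax : ∀ t : K, |g t| ≤ |g t₀| := fun t => ht₀max (Set.mem_univ t)
    have ht₀1 : |g t₀| = 1 := by
      apply le_antisymm
      · calc |g t₀| = ‖g t₀‖ := (Real.norm_eq_abs _).symm
          _ ≤ ‖g‖ := g.norm_coe_le_norm t₀
          _ = 1 := hgnorm
      · rw [← hgnorm]
        exact (ContinuousMap.norm_le g (abs_nonneg _)).mpr fun t => by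
          rw [Real.norm_eq_abs]; exact hmax t
    obtain ⟨L, -, hLuniq⟩ := hT (ContinuousLinearMap.id ℝ ℝ)
    have hidn : ‖(ContinuousLinearMap.id ℝ ℝ)‖ = 1 := ContinuousLinearMap.norm_id
    have hfunc : ∀ t : K, |g t| = 1 →
        (∀ x : ℝ, ((g t) • evalCLM' t) (T x) = (ContinuousLinearMap.id ℝ ℝ) x) ∧
          ‖(g t) • evalCLM' t‖ = ‖(ContinuousLinearMap.id ℝ ℝ)‖ := by
      intro t ht
      have hsq : g t * g t = 1 := by nlinarith [sq_abs (g t)]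
      constructor
      · intro x
        rw [hTx]
        simp only [ContinuousLinearMap.smul_apply, evalCLM'_apply, smul_eq_mul,
          ContinuousLinearMap.id_apply, ContinuousMap.smul_apply]
        linear_combination x * hsq
      · rw [hidn]
        apply le_antisymm
        · refine ContinuousLinearMap.opNorm_le_bound _ zero_le_one fun u => ?_
          simp only [ContinuousLinearMap.smul_apply, evalCLM'_apply, smul_eq_mul,
            Real.norm_eq_abs, abs_mul, ht]
          rw [one_mul, one_mul, ← Real.norm_eq_abs]
          exact u.norm_coe_le_norm t
        · have h1 := ((g t) • evalCLM' t).le_opNorm g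
          simp only [ContinuousLinearMap.smul_apply, evalCLM'_apply, smul_eq_mul,
            Real.norm_eq_abs, hgnorm, mul_one] at h1
          have : |g t * g t| = 1 := by rw [hsq, abs_one]
          linarith [this ▸ h1]
    have huniq : ∀ t : K, |g t| = 1 → t = t₀ := by
      intro t ht
      by_contra hne
      have e1 : (g t) • evalCLM' t = L := hLuniq _ (hfunc t ht)
      have e2 : (g t₀) • evalCLM' t₀ = L := hLuniq _ (hfunc t₀ ht₀1)
      obtain ⟨u, hu0, hu1, -⟩ := exists_continuous_zero_one_of_isClosed
        (isClosed_singleton (x := t)) (isClosed_singleton (x := t₀))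
        (by simpa [Set.disjoint_singleton] using hne)
      have hut : u t = 0 := hu0 rfl
      have hut₀ : u t₀ = 1 := hu1 rfl
      have heq := congrArg (fun M : C(K, ℝ) →L[ℝ] ℝ => M u) (e1.trans e2.symm)
      simp only [ContinuousLinearMap.smul_apply, evalCLM'_apply, smul_eq_mul,
        hut, hut₀, mul_zero, mul_one] at heq
      rw [← heq, abs_zero] at ht₀1
      exact zero_ne_one ht₀1
    refine ⟨t₀, ?_⟩
    have hset : ({t₀} : Set K) = (fun t => |g t|) ⁻¹' {1} := by
      ext t
      simp only [Set.mem_singleton_iff, Set.mem_preimage]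
      exact ⟨fun h => h ▸ ht₀1, fun h => huniq t h⟩
    rw [hset]
    exact isGδ_preimage (IsGδ.singleton 1) (continuous_abs.comp (map_continuous g))
  · rintro ⟨t₀, ht₀⟩
    obtain ⟨g, hgpre, -, -, hg01⟩ := exists_continuous_one_zero_of_isCompact_of_isGδ
      isCompact_singleton ht₀ isClosed_empty (Set.disjoint_empty _)
    have hgt₀ : g t₀ = 1 := by
      have : t₀ ∈ g ⁻¹' {1} := hgpre ▸ Set.mem_singleton t₀
      simpa using this
    have huniq : ∀ t, g t = 1 → t = t₀ := by
      intro t ht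
      have : t ∈ ({t₀} : Set K) := by rw [hgpre]; simpa using ht
      simpa using this
    have hg0 : ∀ t, 0 ≤ g t := fun t => (hg01 t).1
    have hg1 : ∀ t, g t ≤ 1 := fun t => (hg01 t).2
    have hgnorm : ‖g‖ = 1 := by
      apply le_antisymm
      · exact (ContinuousMap.norm_le g zero_le_one).mpr fun t => by
          rw [Real.norm_eq_abs, abs_le]; exact ⟨by linarith [hg0 t], hg1 t⟩
      · calc (1 : ℝ) = ‖g t₀‖ := by rw [hgt₀]; simp
          _ ≤ ‖g‖ := g.norm_coe_le_norm t₀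
    refine ⟨{ toLinearMap := LinearMap.toSpanSingleton ℝ _ g
              norm_map' := fun x => by
                simp [LinearMap.toSpanSingleton_apply, norm_smul, hgnorm] }, fun f => ?_⟩
    set c : ℝ := f 1 with hc
    have hfx : ∀ x : ℝ, f x = x * c := fun x => by
      rw [hc]
      conv_lhs => rw [show x = x • (1 : ℝ) by simp]
      rw [f.map_smul, smul_eq_mul]
    have hfn : ‖f‖ = |c| := by
      apply le_antisymm
      · refine ContinuousLinearMap.opNorm_le_bound _ (abs_nonneg c) fun x => ?_
        rw [hfx, Real.norm_eq_abs, Real.norm_eq_abs, abs_mul, mul_comm]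
      · have h1 := f.le_opNorm 1
        simpa using h1
    have hTx : ∀ x : ℝ,
        ({ toLinearMap := LinearMap.toSpanSingleton ℝ _ g
           norm_map' := fun x => by
             simp [LinearMap.toSpanSingleton_apply, norm_smul, hgnorm] } :
           ℝ →ₗᵢ[ℝ] C(K, ℝ)) x = x • g := fun x => rfl
    refine ⟨c • evalCLM' t₀, ⟨?_, ?_⟩, ?_⟩
    · intro x
      rw [hfx, hTx]
      simp only [ContinuousLinearMap.smul_apply, evalCLM'_apply, smul_eq_mul,
        ContinuousMap.smul_apply, hgt₀]
      ring
    · rw [hfn]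
      apply le_antisymm
      · refine ContinuousLinearMap.opNorm_le_bound _ (abs_nonneg c) fun u => ?_
        simp only [ContinuousLinearMap.smul_apply, evalCLM'_apply, smul_eq_mul,
          Real.norm_eq_abs, abs_mul]
        exact mul_le_mul_of_nonneg_left
          (by simpa using u.norm_coe_le_norm t₀) (abs_nonneg c)
      · have h1 := (c • evalCLM' t₀).le_opNorm g
        simp only [ContinuousLinearMap.smul_apply, evalCLM'_apply, smul_eq_mul,
          Real.norm_eq_abs, hgnorm, mul_one, hgt₀] at h1
        exact h1
    · rintro L ⟨hLext, hLn⟩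
      rcases eq_or_ne c 0 with hc0 | hc0
      · have hL0 : ‖L‖ = 0 := by rw [hLn, hfn, hc0, abs_zero]
        rw [(ContinuousLinearMap.opNorm_zero_iff L).mp hL0, hc0, zero_smul]
      · have hLg : L g = c := by
          have h1 := hLext 1
          rwa [hTx, one_smul, hfx, one_mul] at h1
        have hmain : ∀ u : C(K, ℝ), (c⁻¹ • L) u = u t₀ := by
          refine smooth_support_eval g t₀ hg0 hg1 hgt₀ huniq (c⁻¹ • L) ?_ ?_
          · refine le_trans (ContinuousLinearMap.opNorm_smul_le c⁻¹ L) (le_of_eq ?_)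
            rw [hLn, hfn, Real.norm_eq_abs, abs_inv,
              inv_mul_cancel₀ (abs_ne_zero.mpr hc0)]
          · simp only [ContinuousLinearMap.smul_apply, smul_eq_mul, hLg]
            exact inv_mul_cancel₀ hc0
        ext u
        have h1 := hmain u
        simp only [ContinuousLinearMap.smul_apply, smul_eq_mul, evalCLM'_apply] at h1 ⊢
        field_simp at h1
        rw [h1]
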